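/- (Telescoping estimate) Let 0 < β < α < mn, 0 < p₀ < n/α, and f⃗ with ‖f⃗‖_{M^{P⃗,p₀}} = 1. Then for every dyadic cube Q and every x ∈ Q, |I_α^D(f⃗)(x)| ≲ ℓ_Q^{α−β} M_β^D(f⃗)(x) + ℓ_Q^{α−n/p₀}, with implicit constant independent of Q, x, f⃗. -/

import Mathlib

open MeasureTheory ENNReal

noncomputable section

variable {n : ℕ}

/-- Axis-parallel cube with lower corner `a` and side length `r` (half-open). -/
def cube (a : Fin n → ℝ) (r : ℝ) : Set (Fin n → ℝ) :=
  {y | ∀ i, a i ≤ y i ∧ y i < a i + r}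

/-- The dyadic cube `2^{-k}(m + [0,1)^n)`. -/
def dyadicCube (k : ℤ) (mv : Fin n → ℤ) : Set (Fin n → ℝ) :=
  cube (fun i => (mv i : ℝ) * (2 : ℝ) ^ (-k)) ((2 : ℝ) ^ (-k))

/-- The concentric triple `3Q` of the cube with corner `a` and side `r`. -/
def tripleCube (a : Fin n → ℝ) (r : ℝ) : Set (Fin n → ℝ) :=
  cube (fun i => a i - r) (3 * r)

/-- The Morrey norm `‖f‖_{M^{p,p₀}}`. -/
def morreyNorm (p p0 : ℝ) (f : (Fin n → ℝ) → ℝ) : ℝ≥0∞ :=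
  ⨆ (a : Fin n → ℝ) (r : ℝ) (_ : 0 < r),
    volume (cube a r) ^ (1 / p0 - 1 / p) *
      (∫⁻ x in cube a r, ENNReal.ofReal |f x| ^ p) ^ (1 / p)

/-- The product Morrey norm `‖f⃗‖_{M^{P⃗,p₀}}`. -/
def prodMorreyNorm {m : ℕ} (P : Fin m → ℝ) (p p0 : ℝ)
    (f : Fin m → (Fin n → ℝ) → ℝ) : ℝ≥0∞ :=
  ⨆ (a : Fin n → ℝ) (r : ℝ) (_ : 0 < r),
    volume (cube a r) ^ (1 / p0 - 1 / p) *
      ∏ j, (∫⁻ x in cube a r, ENNReal.ofReal |f j x| ^ P j) ^ (1 / P j)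

/-- The Radon–Morrey norm `‖g‖_{M_μ^{q,q₀}}`. -/
def radonMorreyNorm (μ : Measure (Fin n → ℝ)) (q q0 : ℝ)
    (g : (Fin n → ℝ) → ℝ≥0∞) : ℝ≥0∞ :=
  ⨆ (a : Fin n → ℝ) (r : ℝ) (_ : 0 < r),
    volume (cube a r) ^ (1 / q0 - 1 / q) * (∫⁻ x in cube a r, g x ^ q ∂μ) ^ (1 / q)

/-- The growth norm `‖μ‖_β := sup_Q μ(Q)/ℓ_Q^β`. -/
def measureGrowthNorm (μ : Measure (Fin n → ℝ)) (β : ℝ) : ℝ≥0∞ :=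
  ⨆ (a : Fin n → ℝ) (r : ℝ) (_ : 0 < r), μ (cube a r) / ENNReal.ofReal r ^ β

/-- The `m`-sublinear fractional maximal operator `𝔐_α`. -/
def fracMaximal {m : ℕ} (α : ℝ) (f : Fin m → (Fin n → ℝ) → ℝ)
    (x : Fin n → ℝ) : ℝ≥0∞ :=
  ⨆ (a : Fin n → ℝ) (r : ℝ) (_ : 0 < r) (_ : x ∈ cube a r),
    ENNReal.ofReal r ^ (α - (m : ℝ) * n) *
      ∏ j, ∫⁻ y in cube a r, ENNReal.ofReal |f j y|

/-- The dyadic `m`-sublinear fractional maximal operator `𝔐_α^𝒟`. -/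
def dyadicFracMaximal {m : ℕ} (α : ℝ) (f : Fin m → (Fin n → ℝ) → ℝ)
    (x : Fin n → ℝ) : ℝ≥0∞ :=
  ⨆ (k : ℤ) (mv : Fin n → ℤ) (_ : x ∈ dyadicCube k mv),
    ENNReal.ofReal ((2 : ℝ) ^ (-k)) ^ (α - (m : ℝ) * n) *
      ∏ j, ∫⁻ y in dyadicCube k mv, ENNReal.ofReal |f j y|

/-- The dyadic `m`-linear fractional integral operator `ℑ_α^𝒟`. -/
def dyadicFracIntegral {m : ℕ} (α : ℝ) (f : Fin m → (Fin n → ℝ) → ℝ)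
    (x : Fin n → ℝ) : ℝ≥0∞ :=
  ∑' qk : ℤ × (Fin n → ℤ),
    (dyadicCube qk.1 qk.2).indicator
      (fun _ => ENNReal.ofReal ((2 : ℝ) ^ (-qk.1)) ^ (α - (m : ℝ) * n) *
        ∏ j, ∫⁻ y in dyadicCube qk.1 qk.2, ENNReal.ofReal |f j y|) x

/-- The `m`-linear fractional integral operator `ℑ_α` (with Euclidean distances). -/
def fracIntegral {m : ℕ} (α : ℝ) (f : Fin m → (Fin n → ℝ) → ℝ)
    (x : Fin n → ℝ) : ℝ≥0∞ :=
  ∫⁻ y : Fin m → Fin n → ℝ,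
    (∏ j, ENNReal.ofReal |f j (y j)|) /
      ENNReal.ofReal ((∑ j, Real.sqrt (∑ i, (x i - y j i) ^ 2)) ^ ((m : ℝ) * n - α))


/-! ### Auxiliary lemmas -/

lemma holder_one' {γ : Type*} [MeasurableSpace γ] (μ : Measure γ) (g : γ → ℝ≥0∞)
    {p : ℝ} (hp : 1 < p) :
    ∫⁻ a, g a ∂μ ≤ (∫⁻ a, g a ^ p ∂μ) ^ (1 / p) * μ Set.univ ^ (1 - 1 / p) := by
  obtain ⟨φ, hφm, hφle, hφeq⟩ := exists_measurable_le_lintegral_eq μ g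
  rw [hφeq]
  have hpq : p.HolderConjugate (p / (p - 1)) := Real.HolderConjugate.conjExponent hp
  have h := ENNReal.lintegral_mul_le_Lp_mul_Lq μ hpq hφm.aemeasurable
      (aemeasurable_const (b := (1 : ℝ≥0∞)))
  simp only [Pi.mul_apply, mul_one, ENNReal.one_rpow, lintegral_const, one_mul] at h
  refine h.trans (mul_le_mul ?_ ?_ zero_le zero_le)
  · exact ENNReal.rpow_le_rpow (lintegral_mono fun a =>
      ENNReal.rpow_le_rpow (hφle a) (le_of_lt (lt_trans one_pos hp))) (by positivity)
  · have : 1 / (p / (p - 1)) = 1 - 1 / p := by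
      rw [one_div_div]; field_simp
    rw [this]

lemma ofReal_two_zpow (k : ℤ) : ENNReal.ofReal ((2:ℝ) ^ (-k)) = (2:ℝ≥0∞) ^ ((-k : ℤ) : ℝ) := by
  rw [← Real.rpow_intCast 2 (-k), ← ENNReal.ofReal_rpow_of_pos two_pos]
  norm_num

lemma epow_mul (k : ℤ) (c : ℝ) :
    ENNReal.ofReal ((2:ℝ) ^ (-k)) ^ c = (2:ℝ≥0∞) ^ ((-k : ℝ) * c) := by
  rw [ofReal_two_zpow, ← ENNReal.rpow_mul]
  norm_num

lemma rpow_sum' {ι : Type*} {x : ℝ≥0∞} (hx : x ≠ 0) (hx' : x ≠ ⊤) (s : Finset ι) (c : ι → ℝ) :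
    x ^ (∑ i ∈ s, c i) = ∏ i ∈ s, x ^ c i := by
  classical
  induction s using Finset.cons_induction with
  | empty => simp
  | cons i s hi ih => rw [Finset.sum_cons, Finset.prod_cons, ENNReal.rpow_add _ _ hx hx', ih]

lemma volume_cube (a : Fin n → ℝ) (r : ℝ) :
    volume (cube a r) = ENNReal.ofReal r ^ n := by
  have : cube a r = Set.pi Set.univ (fun i => Set.Ico (a i) (a i + r)) := by
    ext y; simp [cube, Set.mem_pi]
  rw [this, volume_pi_pi]
  simp [Real.volume_Ico]

lemma mem_dyadicCube_iff {k : ℤ} {mv : Fin n → ℤ} {x : Fin n → ℝ} :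
    x ∈ dyadicCube k mv ↔ ∀ i, mv i = ⌊x i * (2:ℝ) ^ k⌋ := by
  have h2 : (0:ℝ) < (2:ℝ) ^ k := zpow_pos two_pos k
  have hinv : (2:ℝ) ^ (-k) = ((2:ℝ) ^ k)⁻¹ := zpow_neg 2 k
  constructor
  · intro hx i
    obtain ⟨h1, h2'⟩ := hx i
    symm; rw [Int.floor_eq_iff]
    constructor
    · rw [hinv] at h1
      calc ((mv i : ℝ)) = mv i * ((2:ℝ)^k)⁻¹ * (2:ℝ)^k := by field_simp
        _ ≤ x i * (2:ℝ)^k := mul_le_mul_of_nonneg_right h1 h2.le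
    · have : x i < (mv i + 1) * (2:ℝ)^(-k) := by rw [add_mul, one_mul]; exact h2'
      calc x i * (2:ℝ)^k < (mv i + 1) * (2:ℝ)^(-k) * (2:ℝ)^k :=
            mul_lt_mul_of_pos_right this h2
        _ = mv i + 1 := by rw [hinv]; field_simp
  · intro h
    intro i
    have h1 : ((mv i : ℝ)) ≤ x i * (2:ℝ)^k := by rw [h i]; exact Int.floor_le _
    have h2' : x i * (2:ℝ)^k < mv i + 1 := by rw [h i]; exact Int.lt_floor_add_one _
    constructor
    · have := mul_le_mul_of_nonneg_right h1 (le_of_lt (inv_pos.mpr h2))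
      rw [mul_assoc, mul_inv_cancel₀ h2.ne', mul_one] at this
      rwa [hinv]
    · have := mul_lt_mul_of_pos_right h2' (inv_pos.mpr h2)
      rw [mul_assoc, mul_inv_cancel₀ h2.ne', mul_one] at this
      simp only [add_mul, one_mul, hinv] at this ⊢
      linarith [this]

lemma dy_geom_ge (k : ℤ) (c : ℝ) :
    ∑' (j : ({j : ℤ | k ≤ j} : Set ℤ)), (2:ℝ≥0∞) ^ ((-(j:ℤ) : ℝ) * c) =
      (1 - (2:ℝ≥0∞) ^ (-c))⁻¹ * (2:ℝ≥0∞) ^ ((-k : ℝ) * c) := by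
  let e : ℕ ≃ ({j : ℤ | k ≤ j} : Set ℤ) :=
    { toFun := fun i => ⟨k + i, le_add_of_nonneg_right (Int.ofNat_nonneg i)⟩
      invFun := fun j => (j.1 - k).toNat
      left_inv := fun i => by simp
      right_inv := fun j => by
        ext; simp only []; have h := j.2
        simp only [Set.mem_setOf_eq] at h
        rw [Int.toNat_of_nonneg (by omega)]; ring }
  rw [← e.tsum_eq]
  have : ∀ i : ℕ, (2:ℝ≥0∞) ^ ((-((e i : ℤ)) : ℝ) * c) =
      ((2:ℝ≥0∞) ^ (-c)) ^ i * (2:ℝ≥0∞) ^ ((-k : ℝ) * c) := by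
    intro i
    have hei : ((e i : ℤ)) = k + i := rfl
    rw [hei, ← ENNReal.rpow_natCast ((2:ℝ≥0∞) ^ (-c)) i, ← ENNReal.rpow_mul,
      ← ENNReal.rpow_add _ _ (by norm_num) (by norm_num)]
    congr 1
    push_cast
    ring
  simp_rw [this]
  rw [ENNReal.tsum_mul_right, ENNReal.tsum_geometric]

lemma dy_geom_lt (k : ℤ) (d : ℝ) :
    ∑' (j : (({j : ℤ | k ≤ j} : Set ℤ)ᶜ : Set ℤ)), (2:ℝ≥0∞) ^ ((-(j:ℤ) : ℝ) * d) =
      (2:ℝ≥0∞) ^ d * (1 - (2:ℝ≥0∞) ^ d)⁻¹ * (2:ℝ≥0∞) ^ ((-k : ℝ) * d) := by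
  let e : ℕ ≃ ((({j : ℤ | k ≤ j} : Set ℤ)ᶜ : Set ℤ)) :=
    { toFun := fun i => ⟨k - 1 - i, by simp [Set.mem_compl_iff]; omega⟩
      invFun := fun j => (k - 1 - j.1).toNat
      left_inv := fun i => by simp
      right_inv := fun j => by
        ext; simp only []
        have : ¬ k ≤ j.1 := j.2
        rw [Int.toNat_of_nonneg (by omega)]; ring }
  rw [← e.tsum_eq]
  have : ∀ i : ℕ, (2:ℝ≥0∞) ^ ((-((e i : ℤ)) : ℝ) * d) =
      ((2:ℝ≥0∞) ^ d) ^ i * ((2:ℝ≥0∞) ^ d * (2:ℝ≥0∞) ^ ((-k : ℝ) * d)) := by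
    intro i
    have hei : ((e i : ℤ)) = k - 1 - i := rfl
    rw [hei, ← ENNReal.rpow_natCast ((2:ℝ≥0∞) ^ d) i, ← ENNReal.rpow_mul,
      ← ENNReal.rpow_add _ _ (by norm_num) (by norm_num),
      ← ENNReal.rpow_add _ _ (by norm_num) (by norm_num)]
    congr 1
    push_cast
    ring
  simp_rw [this]
  rw [ENNReal.tsum_mul_right, ENNReal.tsum_geometric]
  ring

/-- Hölder + Morrey bound for the product of integrals over one cube. -/
lemma prod_lintegral_cube_le {m : ℕ} (P : Fin m → ℝ) (hP : ∀ j, 1 < P j) (p p0 : ℝ)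
    (hp : 1 / p = ∑ j, 1 / P j) (f : Fin m → (Fin n → ℝ) → ℝ)
    (hf : prodMorreyNorm P p p0 f ≤ 1) (a : Fin n → ℝ) {r : ℝ} (hr : 0 < r) :
    ∏ j, ∫⁻ y in cube a r, ENNReal.ofReal |f j y| ≤
      volume (cube a r) ^ ((m : ℝ) - 1 / p0) := by
  set vol := volume (cube a r) with hvoldef
  have hvol : vol = ENNReal.ofReal r ^ n := volume_cube a r
  have hvol0 : vol ≠ 0 := by
    rw [hvol]; exact pow_ne_zero _ (by simp [ENNReal.ofReal_eq_zero, not_le, hr])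
  have hvolt : vol ≠ ⊤ := by
    rw [hvol]; exact pow_ne_top ENNReal.ofReal_ne_top
  have hA : ∀ j, ∫⁻ y in cube a r, ENNReal.ofReal |f j y| ≤
      (∫⁻ y in cube a r, ENNReal.ofReal |f j y| ^ P j) ^ (1 / P j) * vol ^ (1 - 1 / P j) := by
    intro j
    have := holder_one' (volume.restrict (cube a r)) (fun y => ENNReal.ofReal |f j y|) (hP j)
    simpa [Measure.restrict_apply_univ] using this
  have hB : ∏ j, ∫⁻ y in cube a r, ENNReal.ofReal |f j y| ≤
      (∏ j, (∫⁻ y in cube a r, ENNReal.ofReal |f j y| ^ P j) ^ (1 / P j)) *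
        vol ^ ((m : ℝ) - 1 / p) := by
    calc ∏ j, ∫⁻ y in cube a r, ENNReal.ofReal |f j y|
        ≤ ∏ j, ((∫⁻ y in cube a r, ENNReal.ofReal |f j y| ^ P j) ^ (1 / P j) *
            vol ^ (1 - 1 / P j)) := Finset.prod_le_prod' fun j _ => hA j
      _ = (∏ j, (∫⁻ y in cube a r, ENNReal.ofReal |f j y| ^ P j) ^ (1 / P j)) *
            ∏ j, vol ^ (1 - 1 / P j) := Finset.prod_mul_distrib
      _ = _ := by
            rw [← rpow_sum' hvol0 hvolt]
            congr 1
            rw [Finset.sum_sub_distrib, ← hp]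
            simp
  have hC : vol ^ (1 / p0 - 1 / p) *
      ∏ j, (∫⁻ y in cube a r, ENNReal.ofReal |f j y| ^ P j) ^ (1 / P j) ≤ 1 := by
    refine le_trans ?_ hf
    exact le_iSup_of_le a (le_iSup_of_le r (le_iSup_of_le hr le_rfl))
  have hD : ∏ j, (∫⁻ y in cube a r, ENNReal.ofReal |f j y| ^ P j) ^ (1 / P j) ≤
      vol ^ (1 / p - 1 / p0) := by
    have h := mul_le_mul_right hC (vol ^ (1 / p - 1 / p0))
    rwa [mul_one, ← mul_assoc, ← ENNReal.rpow_add _ _ hvol0 hvolt,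
      sub_add_sub_cancel', sub_self, ENNReal.rpow_zero, one_mul] at h
  calc ∏ j, ∫⁻ y in cube a r, ENNReal.ofReal |f j y|
      ≤ (∏ j, (∫⁻ y in cube a r, ENNReal.ofReal |f j y| ^ P j) ^ (1 / P j)) *
          vol ^ ((m : ℝ) - 1 / p) := hB
    _ ≤ vol ^ (1 / p - 1 / p0) * vol ^ ((m : ℝ) - 1 / p) := mul_le_mul_left hD _
    _ = vol ^ ((m : ℝ) - 1 / p0) := by
        rw [← ENNReal.rpow_add _ _ hvol0 hvolt]; ring_nf


theorem statement8 (hn : 0 < n) (m : ℕ) (hm : 0 < m)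
    (P : Fin m → ℝ) (hP : ∀ j, 1 < P j) (p p0 α β : ℝ)
    (hp : 1 / p = ∑ j, 1 / P j)
    (hβ : 0 < β) (hβα : β < α) (hα : α < (m : ℝ) * n)
    (hp0 : 0 < p0) (hp0n : p0 < n / α) :
    ∃ C : ℝ≥0∞, 0 < C ∧ C < ∞ ∧
      ∀ f : Fin m → (Fin n → ℝ) → ℝ, prodMorreyNorm P p p0 f = 1 →
        ∀ (k : ℤ) (mv : Fin n → ℤ) (x : Fin n → ℝ), x ∈ dyadicCube k mv →
          dyadicFracIntegral α f x ≤
            C * (ENNReal.ofReal ((2 : ℝ) ^ (-k)) ^ (α - β) * dyadicFracMaximal β f x +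
              ENNReal.ofReal ((2 : ℝ) ^ (-k)) ^ (α - n / p0)) := by
  have hα0 : 0 < α := lt_trans hβ hβα
  have hnp0 : α < (n : ℝ) / p0 := by
    rw [lt_div_iff₀ hp0]
    have := (lt_div_iff₀ hα0).mp hp0n
    linarith
  set c : ℝ := α - β with hcdef
  set d : ℝ := α - (n : ℝ) / p0 with hddef
  have hc0 : 0 < c := sub_pos.mpr hβα
  have hd0 : d < 0 := sub_neg.mpr hnp0
  have hrc : (2:ℝ≥0∞) ^ (-c) < 1 :=
    ENNReal.rpow_lt_one_of_one_lt_of_neg one_lt_two (neg_neg_of_pos hc0)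
  have hrd : (2:ℝ≥0∞) ^ d < 1 :=
    ENNReal.rpow_lt_one_of_one_lt_of_neg one_lt_two hd0
  set C1 : ℝ≥0∞ := (1 - (2:ℝ≥0∞) ^ (-c))⁻¹ with hC1def
  set C2 : ℝ≥0∞ := (2:ℝ≥0∞) ^ d * (1 - (2:ℝ≥0∞) ^ d)⁻¹ with hC2def
  have hC1top : C1 < ⊤ := ENNReal.inv_lt_top.mpr (tsub_pos_iff_lt.mpr hrc)
  have hC2top : C2 < ⊤ :=
    ENNReal.mul_lt_top (lt_trans hrd one_lt_top)
      (ENNReal.inv_lt_top.mpr (tsub_pos_iff_lt.mpr hrd))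
  have hC1pos : 0 < C1 := by
    rw [hC1def, ENNReal.inv_pos]
    exact (lt_of_le_of_lt tsub_le_self one_lt_top).ne
  refine ⟨C1 + C2, lt_of_lt_of_le hC1pos le_self_add, ENNReal.add_lt_top.mpr ⟨hC1top, hC2top⟩, ?_⟩
  intro f hf k mv x hx
  -- the unique dyadic cube of generation k' containing x
  set mvx : ℤ → Fin n → ℤ := fun k' i => ⌊x i * (2:ℝ) ^ k'⌋ with hmvxdef
  have hmem : ∀ k', x ∈ dyadicCube k' (mvx k') := fun k' =>
    mem_dyadicCube_iff.mpr fun i => rfl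
  set T : ℤ → ℝ≥0∞ := fun k' =>
    ENNReal.ofReal ((2:ℝ) ^ (-k')) ^ (α - (m : ℝ) * n) *
      ∏ j, ∫⁻ y in dyadicCube k' (mvx k'), ENNReal.ofReal |f j y| with hTdef
  have hE0 : ∀ k' : ℤ, ENNReal.ofReal ((2:ℝ) ^ (-k')) ≠ 0 := fun k' =>
    (ENNReal.ofReal_pos.mpr (zpow_pos two_pos _)).ne'
  have hEt : ∀ k' : ℤ, ENNReal.ofReal ((2:ℝ) ^ (-k')) ≠ ⊤ := fun _ => ENNReal.ofReal_ne_top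
  -- Step 1 : the fractional integral is a sum over generations
  have hrepr : dyadicFracIntegral α f x = ∑' k' : ℤ, T k' := by
    rw [dyadicFracIntegral, ENNReal.tsum_prod']
    refine tsum_congr fun k' => ?_
    rw [tsum_eq_single (mvx k') ?_]
    · exact Set.indicator_of_mem (hmem k') _
    · intro mv' hne
      refine Set.indicator_of_notMem (fun hmem' => hne ?_) _
      funext i
      exact mem_dyadicCube_iff.mp hmem' i
  -- Step 2 : split the sum
  have hsplit : ∑' k' : ℤ, T k' =
      (∑' j : ({j : ℤ | k ≤ j} : Set ℤ), T j) +
        ∑' j : (({j : ℤ | k ≤ j} : Set ℤ)ᶜ : Set ℤ), T j :=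
    (Summable.tsum_add_tsum_compl ENNReal.summable ENNReal.summable).symm
  set M : ℝ≥0∞ := dyadicFracMaximal β f x with hMdef
  -- Step 3a : small cubes
  have hsmall : ∀ j : ({j : ℤ | k ≤ j} : Set ℤ),
      T j ≤ (2:ℝ≥0∞) ^ ((-(j : ℤ) : ℝ) * c) * M := by
    intro j
    have key : ENNReal.ofReal ((2:ℝ) ^ (-(j:ℤ))) ^ (β - (m : ℝ) * n) *
        ∏ j', ∫⁻ y in dyadicCube j (mvx j), ENNReal.ofReal |f j' y| ≤ M :=
      le_iSup_of_le (j : ℤ) (le_iSup_of_le (mvx j) (le_iSup_of_le (hmem j) le_rfl))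
    have hsplitpow : ENNReal.ofReal ((2:ℝ) ^ (-(j:ℤ))) ^ (α - (m : ℝ) * n) =
        ENNReal.ofReal ((2:ℝ) ^ (-(j:ℤ))) ^ c *
          ENNReal.ofReal ((2:ℝ) ^ (-(j:ℤ))) ^ (β - (m : ℝ) * n) := by
      rw [← ENNReal.rpow_add _ _ (hE0 _) (hEt _)]
      congr 1
      rw [hcdef]; ring
    calc T j = ENNReal.ofReal ((2:ℝ) ^ (-(j:ℤ))) ^ c *
        (ENNReal.ofReal ((2:ℝ) ^ (-(j:ℤ))) ^ (β - (m : ℝ) * n) *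
          ∏ j', ∫⁻ y in dyadicCube j (mvx j), ENNReal.ofReal |f j' y|) := by
          rw [hTdef]; simp only []; rw [hsplitpow, mul_assoc]
      _ ≤ ENNReal.ofReal ((2:ℝ) ^ (-(j:ℤ))) ^ c * M := mul_le_mul_right key _
      _ = (2:ℝ≥0∞) ^ ((-(j : ℤ) : ℝ) * c) * M := by rw [epow_mul]
  -- Step 3b : big cubes
  have hbig : ∀ j : (({j : ℤ | k ≤ j} : Set ℤ)ᶜ : Set ℤ),
      T j ≤ (2:ℝ≥0∞) ^ ((-(j : ℤ) : ℝ) * d) := by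
    intro j
    have hr : (0:ℝ) < (2:ℝ) ^ (-(j:ℤ)) := zpow_pos two_pos _
    have hprod : ∏ j', ∫⁻ y in dyadicCube (j:ℤ) (mvx j), ENNReal.ofReal |f j' y| ≤
        volume (cube (fun i => ((mvx j i : ℝ)) * (2:ℝ) ^ (-(j:ℤ))) ((2:ℝ) ^ (-(j:ℤ)))) ^
          ((m : ℝ) - 1 / p0) :=
      prod_lintegral_cube_le P hP p p0 hp f (le_of_eq hf) _ hr
    have hvol : volume (cube (fun i => ((mvx j i : ℝ)) * (2:ℝ) ^ (-(j:ℤ))) ((2:ℝ) ^ (-(j:ℤ)))) ^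
        ((m : ℝ) - 1 / p0) =
        ENNReal.ofReal ((2:ℝ) ^ (-(j:ℤ))) ^ ((n : ℝ) * ((m : ℝ) - 1 / p0)) := by
      rw [volume_cube, ← ENNReal.rpow_natCast (ENNReal.ofReal ((2:ℝ) ^ (-(j:ℤ)))) n,
        ← ENNReal.rpow_mul]
    calc T j ≤ ENNReal.ofReal ((2:ℝ) ^ (-(j:ℤ))) ^ (α - (m : ℝ) * n) *
        ENNReal.ofReal ((2:ℝ) ^ (-(j:ℤ))) ^ ((n : ℝ) * ((m : ℝ) - 1 / p0)) := by
          rw [hTdef]; simp only []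
          rw [← hvol]
          exact mul_le_mul_right hprod _
      _ = ENNReal.ofReal ((2:ℝ) ^ (-(j:ℤ))) ^ d := by
          rw [← ENNReal.rpow_add _ _ (hE0 _) (hEt _)]
          congr 1
          rw [hddef]; ring
      _ = (2:ℝ≥0∞) ^ ((-(j : ℤ) : ℝ) * d) := epow_mul _ _
  -- assemble
  have hS1 : (∑' j : ({j : ℤ | k ≤ j} : Set ℤ), T j) ≤
      C1 * (ENNReal.ofReal ((2:ℝ) ^ (-k)) ^ c * M) := by
    calc (∑' j : ({j : ℤ | k ≤ j} : Set ℤ), T j)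
        ≤ ∑' j : ({j : ℤ | k ≤ j} : Set ℤ), (2:ℝ≥0∞) ^ ((-(j : ℤ) : ℝ) * c) * M :=
          Summable.tsum_le_tsum hsmall ENNReal.summable ENNReal.summable
      _ = (∑' j : ({j : ℤ | k ≤ j} : Set ℤ), (2:ℝ≥0∞) ^ ((-(j : ℤ) : ℝ) * c)) * M :=
          ENNReal.tsum_mul_right
      _ = C1 * (2:ℝ≥0∞) ^ ((-k : ℝ) * c) * M := by rw [dy_geom_ge]
      _ = C1 * (ENNReal.ofReal ((2:ℝ) ^ (-k)) ^ c * M) := by rw [epow_mul, mul_assoc]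
  have hS2 : (∑' j : (({j : ℤ | k ≤ j} : Set ℤ)ᶜ : Set ℤ), T j) ≤
      C2 * ENNReal.ofReal ((2:ℝ) ^ (-k)) ^ d := by
    calc (∑' j : (({j : ℤ | k ≤ j} : Set ℤ)ᶜ : Set ℤ), T j)
        ≤ ∑' j : (({j : ℤ | k ≤ j} : Set ℤ)ᶜ : Set ℤ), (2:ℝ≥0∞) ^ ((-(j : ℤ) : ℝ) * d) :=
          Summable.tsum_le_tsum hbig ENNReal.summable ENNReal.summable
      _ = C2 * (2:ℝ≥0∞) ^ ((-k : ℝ) * d) := dy_geom_lt k d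
      _ = C2 * ENNReal.ofReal ((2:ℝ) ^ (-k)) ^ d := by rw [epow_mul]
  calc dyadicFracIntegral α f x
      = (∑' j : ({j : ℤ | k ≤ j} : Set ℤ), T j) +
          ∑' j : (({j : ℤ | k ≤ j} : Set ℤ)ᶜ : Set ℤ), T j := by rw [hrepr, hsplit]
    _ ≤ C1 * (ENNReal.ofReal ((2:ℝ) ^ (-k)) ^ c * M) +
          C2 * ENNReal.ofReal ((2:ℝ) ^ (-k)) ^ d := add_le_add hS1 hS2
    _ ≤ (C1 + C2) * (ENNReal.ofReal ((2:ℝ) ^ (-k)) ^ c * M) +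
          (C1 + C2) * ENNReal.ofReal ((2:ℝ) ^ (-k)) ^ d :=
        add_le_add (mul_le_mul_left le_self_add _) (mul_le_mul_left le_add_self _)
    _ = (C1 + C2) * (ENNReal.ofReal ((2:ℝ) ^ (-k)) ^ (α - β) * M +
          ENNReal.ofReal ((2:ℝ) ^ (-k)) ^ (α - n / p0)) := by
        rw [← mul_add]
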